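/- Assume γ_i > γ_o. Then Re q_1 > 0 and Re q_{−1} > 0, and moreover the infimum inf { Re q_n : n ∈ ℤ \ {0}, Re q_n > 0 } is strictly positive; in particular the linearization at the trivial solution has at least one eigenvalue with positive real part, bounded away from the imaginary axis. -/

import Mathlib

open Complex Filter

/-- `A_n := sign(n)·((R^{2n}+1)/(R^{2n}−1))·α_o + α_i`. -/
noncomputable def Aseq (αi αo R : ℝ) (n : ℤ) : ℝ :=
  (n.sign : ℝ) * ((R ^ (2 * n) + 1) / (R ^ (2 * n) - 1)) * αo + αi

/-- `μ(n) := |n|·(σ − 2(γ_o − γ_i) − σ·n²)`. -/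
noncomputable def museq (σ γi γo : ℝ) (n : ℤ) : ℝ :=
  (|n| : ℝ) * (σ - 2 * (γo - γi) - σ * (n : ℝ) ^ 2)

/-- `q_n := ((A_n + i·sign(n)·B)/(A_n² + B²))·μ(n)` with `B := β_o − β_i`,
the Fourier symbol (44) of the linearized evolution operator. -/
noncomputable def qseq (αi αo βi βo R σ γi γo : ℝ) (n : ℤ) : ℂ :=
  (((Aseq αi αo R n : ℝ) : ℂ) + Complex.I * (n.sign : ℂ) * ((βo - βi : ℝ) : ℂ)) /
    ((Aseq αi αo R n ^ 2 + (βo - βi) ^ 2 : ℝ) : ℂ) * ((museq σ γi γo n : ℝ) : ℂ)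

lemma re_helper19 (a s b d m : ℝ) :
    ((((a:ℂ)) + Complex.I * (s:ℂ) * (b:ℂ)) / (d:ℂ) * (m:ℂ)).re = a / d * m := by
  rcases eq_or_ne d 0 with h | h
  · simp [h]
  · have : (((a:ℂ)) + Complex.I * (s:ℂ) * (b:ℂ)) / (d:ℂ) * (m:ℂ)
        = ((a/d*m : ℝ):ℂ) + Complex.I * ((s*b/d*m : ℝ):ℂ) := by
      push_cast
      field_simp
    rw [this]
    simp

lemma qseq_re19 (αi αo βi βo R σ γi γo : ℝ) (n : ℤ) :
    (qseq αi αo βi βo R σ γi γo n).re =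
      Aseq αi αo R n / (Aseq αi αo R n ^ 2 + (βo - βi) ^ 2) * museq σ γi γo n := by
  have := re_helper19 (Aseq αi αo R n) (n.sign : ℝ) (βo - βi)
    (Aseq αi αo R n ^ 2 + (βo - βi) ^ 2) (museq σ γi γo n)
  rw [qseq]
  push_cast at this ⊢
  exact this

lemma Aseq_pos19 {αi αo R : ℝ} (hαi : 0 < αi) (hαo : 0 < αo) (hR : 2 ≤ R)
    {n : ℤ} (hn : n ≠ 0) : 0 < Aseq αi αo R n := by
  have hR1 : (1:ℝ) < R := lt_of_lt_of_le one_lt_two hR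
  have hR0 : (0:ℝ) < R := lt_trans one_pos hR1
  rcases lt_or_gt_of_ne hn with h | h
  · have hz : R ^ (2*n) < 1 := zpow_lt_one_of_neg₀ hR1 (by omega)
    have hz0 : (0:ℝ) < R ^ (2*n) := zpow_pos hR0 _
    have hfrac : (R ^ (2*n) + 1) / (R ^ (2*n) - 1) < 0 :=
      div_neg_of_pos_of_neg (by linarith) (by linarith)
    have hs : (n.sign : ℝ) = -1 := by
      rw [Int.sign_eq_neg_one_of_neg h]; norm_num
    rw [Aseq, hs]
    nlinarith
  · have hz : 1 < R ^ (2*n) := one_lt_zpow₀ hR1 (by omega)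
    have hfrac : 0 < (R ^ (2*n) + 1) / (R ^ (2*n) - 1) :=
      div_pos (by linarith) (by linarith)
    have hs : (n.sign : ℝ) = 1 := by
      rw [Int.sign_eq_one_of_pos h]; norm_num
    rw [Aseq, hs]
    nlinarith

/-- unstable case, `ϱ_i > ϱ_o`, i.e. `γ_i > γ_o`: `Re q_1 > 0` and
`Re q_{−1} > 0`, and the infimum `inf {Re q_n : n ≠ 0, Re q_n > 0}` is strictly
positive; so the linearization has an eigenvalue with positive real part, bounded
away from the imaginary axis. -/
theorem statement19 (αi αo βi βo R σ γi γo : ℝ)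
    (hαi : 0 < αi) (hαo : 0 < αo) (hβi : 0 ≤ βi) (hβo : 0 ≤ βo) (hR : 2 ≤ R)
    (hσ : 0 < σ) (hγ : γo < γi) :
    0 < (qseq αi αo βi βo R σ γi γo 1).re
    ∧ 0 < (qseq αi αo βi βo R σ γi γo (-1)).re
    ∧ 0 < sInf {x : ℝ | ∃ n : ℤ, n ≠ 0 ∧
        x = (qseq αi αo βi βo R σ γi γo n).re ∧ 0 < x} := by
  -- positivity of Re q_n for n = ±1
  have key : ∀ n : ℤ, n ≠ 0 → 0 < museq σ γi γo n →
      0 < (qseq αi αo βi βo R σ γi γo n).re := by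
    intro n hn hμ
    rw [qseq_re19]
    have hA := Aseq_pos19 hαi hαo hR hn
    have hD : 0 < Aseq αi αo R n ^ 2 + (βo - βi) ^ 2 := by positivity
    exact mul_pos (div_pos hA hD) hμ
  have hμ1 : 0 < museq σ γi γo 1 := by
    rw [museq]; norm_num; linarith
  have hμm1 : 0 < museq σ γi γo (-1) := by
    rw [museq]; norm_num; linarith
  have h1 := key 1 (by norm_num) hμ1
  have hm1 := key (-1) (by norm_num) hμm1
  refine ⟨h1, hm1, ?_⟩
  set S : Set ℝ := {x : ℝ | ∃ n : ℤ, n ≠ 0 ∧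
      x = (qseq αi αo βi βo R σ γi γo n).re ∧ 0 < x} with hS
  -- S is finite: positivity of Re q_n forces μ(n) > 0, bounding |n|.
  set M : ℤ := ⌈(σ + 2 * (γi - γo)) / σ⌉ with hM
  have hsub : S ⊆ (fun n : ℤ => (qseq αi αo βi βo R σ γi γo n).re) '' (Set.Icc (-M) M) := by
    rintro x ⟨n, hn, rfl, hpos⟩
    refine ⟨n, ?_, rfl⟩
    -- from positivity derive μ(n) > 0
    have hA := Aseq_pos19 hαi hαo hR hn
    have hD : 0 < Aseq αi αo R n ^ 2 + (βo - βi) ^ 2 := by positivity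
    rw [qseq_re19] at hpos
    have hμ : 0 < museq σ γi γo n := by
      by_contra hle
      push_neg at hle
      nlinarith [div_pos hA hD]
    rw [museq] at hμ
    have habs : (0:ℝ) < |(n:ℝ)| := abs_pos.mpr (Int.cast_ne_zero.mpr hn)
    have h2 : 0 < σ - 2 * (γo - γi) - σ * (n : ℝ) ^ 2 := by
      by_contra hle
      push_neg at hle
      have := mul_nonpos_of_nonneg_of_nonpos (abs_nonneg (n:ℝ)) hle
      linarith
    have hsq : (n : ℝ) ^ 2 < (σ + 2 * (γi - γo)) / σ := by
      rw [lt_div_iff₀ hσ]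
      nlinarith
    have habs2 : |(n:ℝ)| ≤ (n : ℝ) ^ 2 := by
      have h1 : (1:ℝ) ≤ |(n:ℝ)| := by
        rw [← Int.cast_abs]
        exact_mod_cast Int.one_le_abs hn
      nlinarith [_root_.sq_abs (n:ℝ)]
    have hlt : |(n:ℝ)| < (M : ℝ) + 1 := by
      have := Int.le_ceil ((σ + 2 * (γi - γo)) / σ)
      rw [← hM] at this
      linarith
    have hnM : |n| ≤ M := by
      have : |n| < M + 1 := by
        rw [← Int.cast_abs] at hlt
        exact_mod_cast hlt
      omega
    have := abs_le.mp hnM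
    exact ⟨this.1, this.2⟩
  have hfin : S.Finite :=
    Set.Finite.subset ((Set.finite_Icc (-M) M).image _) hsub
  have hne : S.Nonempty := ⟨_, 1, by norm_num, rfl, h1⟩
  have hmem : sInf S ∈ S := hne.csInf_mem hfin
  obtain ⟨n, hn, heq, hx⟩ := hmem
  rw [heq] at hx ⊢
  exact hx
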